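/- Let s, p, q be three non-collinear points in the plane and let r be a point lying in the interior of the triangle with vertices s, p, q. Then the three angles subtended at r by the three sides [s,p], [p,q], [q,s] sum to 2π; consequently, at least one of these angles is at least 2π/3, and in particular strictly greater than π/2. -/

import Mathlib

open Complex Real

attribute [local instance] Complex.finrank_real_complex_fact

noncomputable instance : Module.Oriented ℝ ℂ (Fin 2) := ⟨Complex.orientation⟩

open EuclideanGeometry AffineSubspace AffineMap in
private lemma aux_side (s p q r : ℂ) (h : ¬ Collinear ℝ ({s, p, q} : Set ℂ))
    (w₀ w₁ w₂ : ℝ) (h0 : 0 < w₀) (h1 : 0 < w₁) (h2 : 0 < w₂)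
    (hsum : w₀ + w₁ + w₂ = 1) (hrr : r = w₀ • s + w₁ • p + w₂ • q) :
    (affineSpan ℝ {s, p}).SSameSide r q := by
  have hq : q ∉ affineSpan ℝ ({s, p} : Set ℂ) := by
    intro hq
    have hcol := collinear_insert_of_mem_affineSpan_pair hq
    apply h
    have : ({q, s, p} : Set ℂ) = {s, p, q} := by
      ext x; simp only [Set.mem_insert_iff, Set.mem_singleton_iff]; tauto
    rwa [this] at hcol
  have hc : w₀ + w₁ ≠ 0 := by positivity
  have hm : lineMap s p (w₁ / (w₀ + w₁)) ∈ affineSpan ℝ ({s, p} : Set ℂ) :=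
    AffineMap.lineMap_mem_affineSpan_pair _ _ _
  have key : r = lineMap (lineMap s p (w₁ / (w₀ + w₁))) q w₂ := by
    rw [hrr]
    simp only [AffineMap.lineMap_apply_module]
    match_scalars
    · have h12 : 1 - w₂ = w₀ + w₁ := by linarith
      rw [h12]
      field_simp
      ring
    · have h12 : 1 - w₂ = w₀ + w₁ := by linarith
      rw [h12]
      field_simp
    · ring
  rw [key]
  exact AffineSubspace.sSameSide_lineMap_left hm hq h2

set_option maxHeartbeats 1000000 in
theorem stmt_1 (s p q r : ℂ) (h : ¬ Collinear ℝ ({s, p, q} : Set ℂ))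
    (hr : r ∈ interior (convexHull ℝ ({s, p, q} : Set ℂ))) :
    EuclideanGeometry.angle s r p + EuclideanGeometry.angle p r q +
      EuclideanGeometry.angle q r s = 2 * Real.pi ∧
    ∃ a ∈ ({EuclideanGeometry.angle s r p, EuclideanGeometry.angle p r q,
        EuclideanGeometry.angle q r s} : Set ℝ),
      2 * Real.pi / 3 ≤ a ∧ Real.pi / 2 < a := by
  classical
  have hrange : Set.range ![s, p, q] = ({s, p, q} : Set ℂ) := by
    ext x
    simp only [Matrix.range_cons, Matrix.range_empty, Set.union_empty, Set.mem_insert_iff,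
      Set.mem_singleton_iff, Set.mem_union]
  have hspan : affineSpan ℝ ({s, p, q} : Set ℂ) = ⊤ :=
    interior_convexHull_nonempty_iff_affineSpan_eq_top.mp ⟨r, hr⟩
  have hind : AffineIndependent ℝ ![s, p, q] := by
    rw [affineIndependent_iff_not_collinear, hrange]; exact h
  let b : AffineBasis (Fin 3) ℝ ℂ := ⟨![s, p, q], hind, by rw [hrange]; exact hspan⟩
  have hb : Set.range ⇑b = ({s, p, q} : Set ℂ) := hrange
  have hw : ∀ i, 0 < b.coord i r := by
    have h' : r ∈ interior (convexHull ℝ (Set.range ⇑b)) := by rw [hb]; exact hr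
    rw [b.interior_convexHull] at h'
    exact h'
  have hb0 : b 0 = s := rfl
  have hb1 : b 1 = p := rfl
  have hb2 : b 2 = q := rfl
  have hreq : r = b.coord 0 r • s + b.coord 1 r • p + b.coord 2 r • q := by
    have := b.linear_combination_coord_eq_self r
    rw [Fin.sum_univ_three, hb0, hb1, hb2] at this
    exact this.symm
  have hsum1 : b.coord 0 r + b.coord 1 r + b.coord 2 r = 1 := by
    have := b.sum_coord_apply_eq_one r
    rwa [Fin.sum_univ_three] at this
  set w₀ := b.coord 0 r with hw0
  set w₁ := b.coord 1 r with hw1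
  set w₂ := b.coord 2 r with hw2
  have h0 := hw 0
  have h1 := hw 1
  have h2 := hw 2
  rw [← hw0] at h0
  rw [← hw1] at h1
  rw [← hw2] at h2
  -- set permutation facts
  have hperm1 : ¬ Collinear ℝ ({p, q, s} : Set ℂ) := by
    intro hc; apply h
    have : ({p, q, s} : Set ℂ) = {s, p, q} := by
      ext x; simp only [Set.mem_insert_iff, Set.mem_singleton_iff]; tauto
    rwa [this] at hc
  have hperm2 : ¬ Collinear ℝ ({q, s, p} : Set ℂ) := by
    intro hc; apply h
    have : ({q, s, p} : Set ℂ) = {s, p, q} := by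
      ext x; simp only [Set.mem_insert_iff, Set.mem_singleton_iff]; tauto
    rwa [this] at hc
  -- same-side facts
  have hside1 : (affineSpan ℝ {s, p}).SSameSide r q :=
    aux_side s p q r h w₀ w₁ w₂ h0 h1 h2 hsum1 hreq
  have hside2 : (affineSpan ℝ {p, q}).SSameSide r s := by
    refine aux_side p q s r hperm1 w₁ w₂ w₀ h1 h2 h0 (by linarith) ?_
    rw [hreq]; module
  have hside3 : (affineSpan ℝ {q, s}).SSameSide r p := by
    refine aux_side q s p r hperm2 w₂ w₀ w₁ h2 h0 h1 (by linarith) ?_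
    rw [hreq]; module
  -- sign equalities
  open EuclideanGeometry in
  have hA : (∡ s r p).sign = (∡ s q p).sign :=
    hside1.symm.oangle_sign_eq (left_mem_affineSpan_pair ℝ s p)
      (right_mem_affineSpan_pair ℝ s p)
  open EuclideanGeometry in
  have hB : (∡ p r q).sign = (∡ p s q).sign :=
    hside2.symm.oangle_sign_eq (left_mem_affineSpan_pair ℝ p q)
      (right_mem_affineSpan_pair ℝ p q)
  open EuclideanGeometry in
  have hC : (∡ q r s).sign = (∡ q p s).sign :=
    hside3.symm.oangle_sign_eq (left_mem_affineSpan_pair ℝ q s)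
      (right_mem_affineSpan_pair ℝ q s)
  open EuclideanGeometry in
  have hBA : (∡ p s q).sign = (∡ s q p).sign := (oangle_rotate_sign p s q).symm
  open EuclideanGeometry in
  have hCA : (∡ q p s).sign = (∡ s q p).sign := oangle_rotate_sign s q p
  open EuclideanGeometry in
  have hσ : (∡ s q p).sign ≠ 0 := by
    intro h0
    have hc := oangle_sign_eq_zero_iff_collinear.mp h0
    apply h
    have : ({s, q, p} : Set ℂ) = {s, p, q} := by
      ext x; simp only [Set.mem_insert_iff, Set.mem_singleton_iff]; tauto
    rwa [this] at hc
  open EuclideanGeometry in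
  have hAs : (∡ s r p).sign ≠ 0 := by rw [hA]; exact hσ
  open EuclideanGeometry in
  have hBs : (∡ p r q).sign ≠ 0 := by rw [hB, hBA]; exact hσ
  open EuclideanGeometry in
  have hCs : (∡ q r s).sign ≠ 0 := by rw [hC, hCA]; exact hσ
  open EuclideanGeometry in
  have hsr : s ≠ r := left_ne_of_oangle_sign_ne_zero hAs
  open EuclideanGeometry in
  have hpr : p ≠ r := right_ne_of_oangle_sign_ne_zero hAs
  open EuclideanGeometry in
  have hqr : q ≠ r := right_ne_of_oangle_sign_ne_zero hBs
  open EuclideanGeometry in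
  have hcyc : ∡ s r p + ∡ p r q + ∡ q r s = 0 := oangle_add_cyc3 hsr hpr hqr
  -- unsigned angle facts
  set a := EuclideanGeometry.angle s r p with ha
  set bb := EuclideanGeometry.angle p r q with hbb
  set c := EuclideanGeometry.angle q r s with hcc
  open EuclideanGeometry in
  have haz : a ≠ 0 := by
    intro h'
    exact hAs (by rw [(oangle_eq_zero_iff_angle_eq_zero hsr hpr).mpr h', Real.Angle.sign_zero])
  open EuclideanGeometry in
  have hbz : bb ≠ 0 := by
    intro h'
    exact hBs (by rw [(oangle_eq_zero_iff_angle_eq_zero hpr hqr).mpr h', Real.Angle.sign_zero])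
  open EuclideanGeometry in
  have hcz : c ≠ 0 := by
    intro h'
    exact hCs (by rw [(oangle_eq_zero_iff_angle_eq_zero hqr hsr).mpr h', Real.Angle.sign_zero])
  open EuclideanGeometry in
  have hapi : a ≠ π := by
    intro h'
    exact hAs (by rw [oangle_eq_pi_iff_angle_eq_pi.mpr h', Real.Angle.sign_coe_pi])
  open EuclideanGeometry in
  have hbpi : bb ≠ π := by
    intro h'
    exact hBs (by rw [oangle_eq_pi_iff_angle_eq_pi.mpr h', Real.Angle.sign_coe_pi])
  open EuclideanGeometry in
  have hcpi : c ≠ π := by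
    intro h'
    exact hCs (by rw [oangle_eq_pi_iff_angle_eq_pi.mpr h', Real.Angle.sign_coe_pi])
  have ha0 : 0 < a := lt_of_le_of_ne (EuclideanGeometry.angle_nonneg _ _ _) (Ne.symm haz)
  have hb0' : 0 < bb := lt_of_le_of_ne (EuclideanGeometry.angle_nonneg _ _ _) (Ne.symm hbz)
  have hc0 : 0 < c := lt_of_le_of_ne (EuclideanGeometry.angle_nonneg _ _ _) (Ne.symm hcz)
  have hapi' : a < π := lt_of_le_of_ne (EuclideanGeometry.angle_le_pi _ _ _) hapi
  have hbpi' : bb < π := lt_of_le_of_ne (EuclideanGeometry.angle_le_pi _ _ _) hbpi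
  have hcpi' : c < π := lt_of_le_of_ne (EuclideanGeometry.angle_le_pi _ _ _) hcpi
  -- the coerced sum is zero
  have hcoe : ((a + bb + c : ℝ) : Real.Angle) = 0 := by
    have htri : (EuclideanGeometry.oangle s q p).sign = 1 ∨
        (EuclideanGeometry.oangle s q p).sign = 0 ∨
        (EuclideanGeometry.oangle s q p).sign = -1 := by
      cases h' : (EuclideanGeometry.oangle s q p).sign
      · right; left; rfl
      · right; right; rfl
      · left; rfl
    rcases htri with h' | h' | h'
    · -- sign = 1
      have e1 : EuclideanGeometry.oangle s r p = (a : Real.Angle) :=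
        EuclideanGeometry.oangle_eq_angle_of_sign_eq_one (by rw [hA]; exact h')
      have e2 : EuclideanGeometry.oangle p r q = (bb : Real.Angle) :=
        EuclideanGeometry.oangle_eq_angle_of_sign_eq_one (by rw [hB, hBA]; exact h')
      have e3 : EuclideanGeometry.oangle q r s = (c : Real.Angle) :=
        EuclideanGeometry.oangle_eq_angle_of_sign_eq_one (by rw [hC, hCA]; exact h')
      rw [e1, e2, e3] at hcyc
      rw [Real.Angle.coe_add, Real.Angle.coe_add]
      exact hcyc
    · exact absurd h' hσ
    · -- sign = -1
      have e1 : EuclideanGeometry.oangle s r p = (↑(-a) : Real.Angle) :=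
        EuclideanGeometry.oangle_eq_neg_angle_of_sign_eq_neg_one (by rw [hA]; exact h')
      have e2 : EuclideanGeometry.oangle p r q = (↑(-bb) : Real.Angle) :=
        EuclideanGeometry.oangle_eq_neg_angle_of_sign_eq_neg_one (by rw [hB, hBA]; exact h')
      have e3 : EuclideanGeometry.oangle q r s = (↑(-c) : Real.Angle) :=
        EuclideanGeometry.oangle_eq_neg_angle_of_sign_eq_neg_one (by rw [hC, hCA]; exact h')
      rw [e1, e2, e3] at hcyc
      have : ((-(a + bb + c) : ℝ) : Real.Angle) = 0 := by
        rw [show -(a + bb + c) = -a + -bb + -c by ring, Real.Angle.coe_add, Real.Angle.coe_add]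
        exact hcyc
      rw [Real.Angle.coe_neg, neg_eq_zero] at this
      exact this
  have hsum : a + bb + c = 2 * π := by
    have hpi := Real.pi_pos
    have hcoe' : ((a + bb + c : ℝ) : Real.Angle) = ((0 : ℝ) : Real.Angle) := by
      rw [Real.Angle.coe_zero]; exact hcoe
    obtain ⟨k, hk⟩ := Real.Angle.angle_eq_iff_two_pi_dvd_sub.mp hcoe'
    rw [sub_zero] at hk
    have hk1 : k = 1 := by
      have hklt : (k : ℝ) < 3 / 2 := by nlinarith
      have hkgt : (0 : ℝ) < (k : ℝ) := by nlinarith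
      have h1 : k < 2 := by exact_mod_cast (by linarith : (k : ℝ) < 2)
      have h2 : 0 < k := by exact_mod_cast hkgt
      omega
    rw [hk1] at hk
    push_cast at hk
    linarith
  refine ⟨hsum, ?_⟩
  have hmax : 2 * π / 3 ≤ a ∨ 2 * π / 3 ≤ bb ∨ 2 * π / 3 ≤ c := by
    by_contra hcon
    push_neg at hcon
    obtain ⟨x1, x2, x3⟩ := hcon
    linarith
  have hpi := Real.pi_pos
  rcases hmax with hx | hx | hx
  · exact ⟨a, Or.inl rfl, hx, by linarith⟩
  · exact ⟨bb, Or.inr (Or.inl rfl), hx, by linarith⟩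
  · exact ⟨c, Or.inr (Or.inr rfl), hx, by linarith⟩
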